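/- Let G : U → ℝ be real-analytic on an open neighbourhood U of (0,0) in ℝⁿ × ℝ, y-regular of order d > 1 at (0,0), and set cᵢ(x) := (∂ⁱG/∂yⁱ)(x,0) for 0 ≤ i ≤ d. Assume c_{d−1} ≡ 0 and that for each i < d−1 there is a real-analytic function cᵢ* with cᵢ(x) = x^{α(d−i)}·cᵢ*(x), where α ∈ ℕⁿ, and that c_k*(0) ≠ 0 for some k < d−1. Then H(x,y) := x^{−αd}·G(x, x^α·y) extends to a real-analytic function on a neighbourhood of (0,0) which is y-regular of order at most k at (0,0). -/

import Mathlib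

open Filter Topology
open scoped NNReal ENNReal

namespace LMX

lemma exists_isOpen_analyticOnNhd {E F : Type*} [NormedAddCommGroup E] [NormedSpace ℝ E]
    [NormedAddCommGroup F] [NormedSpace ℝ F] [CompleteSpace F] {f : E → F} {x : E}
    (h : AnalyticAt ℝ f x) : ∃ s : Set E, IsOpen s ∧ x ∈ s ∧ AnalyticOnNhd ℝ f s := by
  obtain ⟨s, hs, hsub⟩ := h.eventually_analyticAt.exists_mem
  exact ⟨interior s, isOpen_interior, mem_interior_iff_mem_nhds.2 hs,
    fun z hz => hsub z (interior_subset hz)⟩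

lemma iteratedDerivWithin_isOpen {f : ℝ → ℝ} {s : Set ℝ} {x : ℝ} (n : ℕ)
    (hs : IsOpen s) (hx : x ∈ s) : iteratedDerivWithin n f s x = iteratedDeriv n f x := by
  rw [iteratedDerivWithin_eq_iteratedFDerivWithin, iteratedDeriv_eq_iteratedFDeriv,
    iteratedFDerivWithin_of_isOpen n hs hx]

lemma iteratedDeriv_add_an {f g : ℝ → ℝ} {x : ℝ} (n : ℕ)
    (hf : AnalyticAt ℝ f x) (hg : AnalyticAt ℝ g x) :
    iteratedDeriv n (fun t => f t + g t) x = iteratedDeriv n f x + iteratedDeriv n g x := by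
  obtain ⟨s, hs, hxs, hfs⟩ := exists_isOpen_analyticOnNhd hf
  obtain ⟨s', hs', hxs', hgs⟩ := exists_isOpen_analyticOnNhd hg
  have ho : IsOpen (s ∩ s') := hs.inter hs'
  have hxss : x ∈ s ∩ s' := ⟨hxs, hxs'⟩
  have h1 : ContDiffOn ℝ n f (s ∩ s') :=
    ((hfs.mono Set.inter_subset_left).contDiffOn ho.uniqueDiffOn).of_le le_top
  have h2 : ContDiffOn ℝ n g (s ∩ s') :=
    ((hgs.mono Set.inter_subset_right).contDiffOn ho.uniqueDiffOn).of_le le_top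
  have := iteratedDerivWithin_add hxss ho.uniqueDiffOn (h1 x hxss) (h2 x hxss)
  rw [iteratedDerivWithin_isOpen n ho hxss, iteratedDerivWithin_isOpen n ho hxss,
    iteratedDerivWithin_isOpen n ho hxss] at this
  exact this

lemma iteratedDeriv_const_mul_an {f : ℝ → ℝ} {x : ℝ} (n : ℕ) (c : ℝ)
    (hf : AnalyticAt ℝ f x) :
    iteratedDeriv n (fun t => c * f t) x = c * iteratedDeriv n f x := by
  obtain ⟨s, hs, hxs, hfs⟩ := exists_isOpen_analyticOnNhd hf
  have h1 : ContDiffOn ℝ n f s := (hfs.contDiffOn hs.uniqueDiffOn).of_le le_top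
  have := iteratedDerivWithin_const_mul hxs hs.uniqueDiffOn c (h1 x hxs)
  rw [iteratedDerivWithin_isOpen n hs hxs, iteratedDerivWithin_isOpen n hs hxs] at this
  exact this

lemma iteratedDeriv_sub_an {f g : ℝ → ℝ} {x : ℝ} (n : ℕ)
    (hf : AnalyticAt ℝ f x) (hg : AnalyticAt ℝ g x) :
    iteratedDeriv n (fun t => f t - g t) x = iteratedDeriv n f x - iteratedDeriv n g x := by
  have h1 : iteratedDeriv n (fun t => f t + -(g t)) x
      = iteratedDeriv n f x + iteratedDeriv n (fun t => -(g t)) x :=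
    iteratedDeriv_add_an n hf hg.neg
  simp only [sub_eq_add_neg]
  rw [h1, iteratedDeriv_fun_neg]

lemma iteratedDeriv_const_fun (j : ℕ) : ∀ (c x : ℝ),
    iteratedDeriv j (fun _ : ℝ => c) x = if j = 0 then c else 0 := by
  induction j with
  | zero => intro c x; simp
  | succ j ih =>
    intro c x
    rw [iteratedDeriv_succ']
    simp only [deriv_const']
    rw [ih 0 x]
    simp

lemma iteratedDeriv_monomial (i j : ℕ) :
    iteratedDeriv j (fun t : ℝ => t ^ i) 0 = if i = j then (i.factorial : ℝ) else 0 := by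
  induction j generalizing i with
  | zero =>
    rcases i with - | i <;> simp
  | succ j ih =>
    rw [iteratedDeriv_succ']
    have hd : deriv (fun t : ℝ => t ^ i) = fun t : ℝ => (i : ℝ) * t ^ (i - 1) := by
      funext t; simp [deriv_pow]
    rw [hd]
    rcases i with - | m
    · simp only [Nat.cast_zero, zero_mul]
      rw [iteratedDeriv_const_fun]
      simp
    · have : iteratedDeriv j (fun t : ℝ => ((m : ℝ) + 1) * t ^ (m + 1 - 1)) 0
          = ((m : ℝ) + 1) * iteratedDeriv j (fun t : ℝ => t ^ m) 0 := by
        simpa using iteratedDeriv_const_mul_an j ((m : ℝ) + 1) ((analyticAt_id).pow m)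
      simp only [Nat.add_sub_cancel] at this
      push_cast
      rw [this, ih]
      rcases eq_or_ne m j with rfl | hmj
      · simp only [if_pos rfl, Nat.factorial_succ]
        push_cast
        ring
      · simp [hmj]



lemma step_mul {g : ℝ → ℝ} (hg : AnalyticAt ℝ g 0) (m j : ℕ) :
    iteratedDeriv (j+1) (fun t : ℝ => t ^ (m+1) * g t) 0
      = iteratedDeriv j (fun t : ℝ => t ^ m * (((m:ℝ)+1) * g t + t * deriv g t)) 0 := by
  rw [iteratedDeriv_succ']
  apply Filter.EventuallyEq.iteratedDeriv_eq
  obtain ⟨s, hs, hxs, hgs⟩ := exists_isOpen_analyticOnNhd hg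
  filter_upwards [hs.mem_nhds hxs] with t ht
  have hgd : DifferentiableAt ℝ g t := ((hgs t ht).differentiableAt)
  rw [deriv_fun_mul (differentiableAt_pow _) hgd]
  simp only [deriv_pow_field]
  push_cast
  ring

lemma g1_an {g : ℝ → ℝ} (hg : AnalyticAt ℝ g 0) (c : ℝ) :
    AnalyticAt ℝ (fun t : ℝ => c * g t + t * deriv g t) 0 := by
  obtain ⟨s, hs, hxs, hgs⟩ := exists_isOpen_analyticOnNhd hg
  exact (analyticAt_const.mul hg).add (analyticAt_id.mul (hgs.deriv 0 hxs))

lemma iteratedDeriv_pow_mul_lt : ∀ (j d : ℕ) (g : ℝ → ℝ), AnalyticAt ℝ g 0 → j < d →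
    iteratedDeriv j (fun t : ℝ => t ^ d * g t) 0 = 0 := by
  intro j
  induction j with
  | zero =>
    intro d g hg hd
    rcases d with - | m
    · omega
    · simp [iteratedDeriv_zero]
  | succ j ih =>
    intro d g hg hd
    rcases d with - | m
    · omega
    · rw [step_mul hg m j]
      exact ih m _ (g1_an hg _) (by omega)

lemma iteratedDeriv_pow_mul_self : ∀ (d : ℕ) (g : ℝ → ℝ), AnalyticAt ℝ g 0 →
    iteratedDeriv d (fun t : ℝ => t ^ d * g t) 0 = (d.factorial : ℝ) * g 0 := by
  intro d
  induction d with
  | zero => intro g hg; simp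
  | succ d ih =>
    intro g hg
    rw [step_mul hg d d, ih _ (g1_an hg _)]
    simp only [zero_mul, add_zero]
    rw [Nat.factorial_succ]
    push_cast
    ring

lemma analyticAt_polysum (a : ℕ → ℝ) (m : ℕ) (x : ℝ) :
    AnalyticAt ℝ (fun t : ℝ => ∑ i ∈ Finset.range m, a i * t ^ i) x :=
  Finset.analyticAt_fun_sum _ (fun i _ => analyticAt_const.mul (analyticAt_id.pow i))

lemma iteratedDeriv_polysum (a : ℕ → ℝ) (m j : ℕ) :
    iteratedDeriv j (fun t : ℝ => ∑ i ∈ Finset.range m, a i * t ^ i) 0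
      = if j < m then a j * (j.factorial : ℝ) else 0 := by
  induction m with
  | zero => simp [iteratedDeriv_const_fun]
  | succ m ih =>
    have he : (fun t : ℝ => ∑ i ∈ Finset.range (m+1), a i * t ^ i)
        = fun t => (∑ i ∈ Finset.range m, a i * t ^ i) + a m * t ^ m := by
      funext t; rw [Finset.sum_range_succ]
    have hpow : AnalyticAt ℝ (fun t : ℝ => t ^ m) 0 := by exact analyticAt_id.pow m
    have hmono : AnalyticAt ℝ (fun t : ℝ => a m * t ^ m) 0 := analyticAt_const.mul hpow
    rw [he, iteratedDeriv_add_an j (analyticAt_polysum a m 0) hmono, ih,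
      iteratedDeriv_const_mul_an j (a m) hpow, iteratedDeriv_monomial]
    rcases lt_trichotomy j m with h | rfl | h
    · have h1 : j < m + 1 := by omega
      have h2 : m ≠ j := by omega
      simp [h, h1, h2]
    · simp
    · have h1 : ¬ j < m := by omega
      have h2 : ¬ j < m + 1 := by omega
      have h3 : m ≠ j := by omega
      simp [h1, h2, h3]



section Divide

variable {n : ℕ}

local notation "E" => ((Fin n → ℝ) × ℝ)

noncomputable def piL (n : ℕ) : ((Fin n → ℝ) × ℝ) →L[ℝ] ((Fin n → ℝ) × ℝ) :=
  (ContinuousLinearMap.inl ℝ (Fin n → ℝ) ℝ).comp (ContinuousLinearMap.fst ℝ (Fin n → ℝ) ℝ)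

lemma piL_apply (w : E) : piL n w = (w.1, 0) := rfl

lemma norm_piL_apply_le (w : E) : ‖piL n w‖ ≤ ‖w‖ := by
  rw [piL_apply]
  rw [Prod.norm_def, Prod.norm_def]
  simp only [norm_zero]
  exact max_le (le_max_left _ _) (le_trans (norm_nonneg _) (le_max_left _ _))

lemma norm_piL_le : ‖piL n‖ ≤ 1 :=
  ContinuousLinearMap.opNorm_le_bound _ zero_le_one (fun w => by
    rw [one_mul]; exact norm_piL_apply_le w)

noncomputable def eV (n : ℕ) : (Fin n → ℝ) × ℝ := (0, 1)

lemma norm_eV : ‖eV n‖ = 1 := by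
  rw [eV, Prod.norm_def]
  simp

lemma divide_by_y {F : ((Fin n → ℝ) × ℝ) → ℝ} {x₀ : Fin n → ℝ}
    (hF : AnalyticAt ℝ F (x₀, 0)) (h0 : ∀ᶠ x in nhds x₀, F (x, 0) = 0) :
    ∃ S : ((Fin n → ℝ) × ℝ) → ℝ, AnalyticAt ℝ S (x₀, 0) ∧
      ∀ᶠ p in nhds ((x₀, 0) : (Fin n → ℝ) × ℝ), F p = p.2 * S p := by
  obtain ⟨p, hp⟩ := hF
  obtain ⟨r, hpr⟩ := hp
  obtain ⟨ε, hε, hε0⟩ := Metric.eventually_nhds_iff.1 h0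
  classical
  -- the divided power series
  set q : FormalMultilinearSeries ℝ ((Fin n → ℝ) × ℝ) ℝ := fun m =>
    ∑ i : Fin (m+1),
      ((((p (m+1)).compContinuousLinearMap
          (fun j => if (j : ℕ) < (i : ℕ) then piL n else ContinuousLinearMap.id ℝ _)).domDomCongr
        (Equiv.swap 0 i)).curryLeft (eV n) :
          ContinuousMultilinearMap ℝ (fun _ : Fin m => (Fin n → ℝ) × ℝ) ℝ) with hq
  -- the cons function
  have hcons : ∀ (m : ℕ) (w : E),
      Fin.cons (α := fun _ : Fin (m+1) => (Fin n → ℝ) × ℝ) (eV n) (fun _ : Fin m => w)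
        = fun z => if z = 0 then eV n else w := by
    intro m w
    funext z
    induction z using Fin.cases with
    | zero => simp
    | succ j => simp [Fin.succ_ne_zero]
  -- diagonal evaluation of each term
  have hterm : ∀ (m : ℕ) (i : Fin (m+1)) (w : E),
      ((((p (m+1)).compContinuousLinearMap
          (fun j => if (j : ℕ) < (i : ℕ) then piL n else ContinuousLinearMap.id ℝ _)).domDomCongr
        (Equiv.swap 0 i)).curryLeft (eV n)) (fun _ : Fin m => w)
      = p (m+1) (fun j => if (j : ℕ) < (i : ℕ) then piL n w
          else if j = i then eV n else w) := by
    intro m i w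
    rw [ContinuousMultilinearMap.curryLeft_apply]
    rw [ContinuousMultilinearMap.domDomCongr_apply]
    rw [ContinuousMultilinearMap.compContinuousLinearMap_apply]
    congr 1
    funext j
    rw [hcons m w]
    rcases eq_or_ne j i with rfl | hji
    · have h1 : Equiv.swap (0 : Fin (m+1)) j j = 0 := by
        rcases eq_or_ne j 0 with rfl | hj0
        · simp
        · simp [Equiv.swap_apply_def, hj0]
      rw [h1]
      simp [lt_irrefl]
    · have h1 : Equiv.swap (0 : Fin (m+1)) i j ≠ 0 := by
        rcases eq_or_ne j 0 with rfl | hj0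
        · simp only [Equiv.swap_apply_left]
          intro h
          exact hji h.symm
        · rw [Equiv.swap_apply_of_ne_of_ne hj0 hji]
          exact hj0
      simp only [if_neg h1, if_neg hji]
      by_cases hlt : (j : ℕ) < (i : ℕ)
      · simp [hlt]
      · simp [hlt]
  -- key diagonal identity
  have hq_diag : ∀ (m : ℕ) (w : E),
      w.2 * (q m (fun _ => w)) = p (m+1) (fun _ => w) - p (m+1) (fun _ => piL n w) := by
    intro m w
    have hsum : q m (fun _ => w)
        = ∑ i : Fin (m+1), p (m+1) (fun j => if (j : ℕ) < (i : ℕ) then piL n w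
            else if j = i then eV n else w) := by
      rw [hq]
      rw [ContinuousMultilinearMap.sum_apply]
      exact Finset.sum_congr rfl (fun i _ => hterm m i w)
    set a : ℕ → ℝ := fun l => p (m+1) (fun j => if (j : ℕ) < l then piL n w else w) with ha
    have hkey : ∀ i : Fin (m+1),
        w.2 * p (m+1) (fun j => if (j : ℕ) < (i : ℕ) then piL n w
            else if j = i then eV n else w)
        = a i - a ((i : ℕ) + 1) := by
      intro i
      set v : Fin (m+1) → E := fun j => if (j : ℕ) < (i : ℕ) then piL n w else w with hv
      have h1 : (fun j : Fin (m+1) => if (j : ℕ) < (i : ℕ) then piL n w else w)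
          = Function.update v i w := by
        funext j
        rw [Function.update_apply]
        rcases eq_or_ne j i with rfl | hji
        · simp [hv]
        · rw [if_neg hji]
      have h2 : (fun j : Fin (m+1) => if (j : ℕ) < (i : ℕ) + 1 then piL n w else w)
          = Function.update v i (piL n w) := by
        funext j
        rw [Function.update_apply]
        rcases eq_or_ne j i with rfl | hji
        · simp [hv]
        · rw [if_neg hji, hv]
          have : (j : ℕ) < (i : ℕ) + 1 ↔ (j : ℕ) < (i : ℕ) := by
            constructor
            · intro h
              rcases Nat.lt_succ_iff_lt_or_eq.1 h with h | h
              · exact h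
              · exact absurd (Fin.ext h) hji
            · omega
          simp only [this]
      have h3 : (fun j : Fin (m+1) => if (j : ℕ) < (i : ℕ) then piL n w
          else if j = i then eV n else w) = Function.update v i (eV n) := by
        funext j
        rw [Function.update_apply]
        rcases eq_or_ne j i with rfl | hji
        · simp [lt_irrefl]
        · rw [if_neg hji, hv]
          simp only [if_neg hji]
      have ha_i : a (i : ℕ) = p (m+1) (Function.update v i w) := by
        rw [ha]; exact congrArg _ h1
      have ha_i1 : a ((i : ℕ) + 1) = p (m+1) (Function.update v i (piL n w)) := by
        rw [ha]; exact congrArg _ h2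
      rw [ha_i, ha_i1, h3]
      rw [← ContinuousMultilinearMap.map_update_sub]
      have hw : w - piL n w = w.2 • eV n := by
        rw [piL_apply, eV]
        ext <;> simp
      rw [hw, ContinuousMultilinearMap.map_update_smul]
      simp
    rw [hsum, Finset.mul_sum]
    rw [Finset.sum_congr rfl (fun i _ => hkey i)]
    have := Fin.sum_univ_eq_sum_range (fun l => a l - a (l + 1)) (m+1)
    rw [this, Finset.sum_range_sub' a]
    have ha0 : a 0 = p (m+1) (fun _ => w) := by
      have he : (fun j : Fin (m+1) => if (j : ℕ) < 0 then piL n w else w) = fun _ => w := by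
        funext j; simp
      simp only [ha]
      rw [he]
    have ham : a (m+1) = p (m+1) (fun _ => piL n w) := by
      have he : (fun j : Fin (m+1) => if (j : ℕ) < m + 1 then piL n w else w)
          = fun _ => piL n w := by
        funext j; simp [j.isLt]
      simp only [ha]
      rw [he]
    rw [ha0, ham]
  -- norm bound
  have hq_norm : ∀ m, ‖q m‖ ≤ ((m : ℝ) + 1) * ‖p (m+1)‖ := by
    intro m
    rw [hq]
    refine le_trans (norm_sum_le _ _) ?_
    have hterm_norm : ∀ i : Fin (m+1),
        ‖((((p (m+1)).compContinuousLinearMap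
            (fun j => if (j : ℕ) < (i : ℕ) then piL n else ContinuousLinearMap.id ℝ _)).domDomCongr
          (Equiv.swap 0 i)).curryLeft (eV n) :
            ContinuousMultilinearMap ℝ (fun _ : Fin m => (Fin n → ℝ) × ℝ) ℝ)‖
          ≤ ‖p (m+1)‖ := by
      intro i
      have hPnorm : ‖(p (m+1)).compContinuousLinearMap
          (fun j => if (j : ℕ) < (i : ℕ) then piL n else ContinuousLinearMap.id ℝ _)‖
          ≤ ‖p (m+1)‖ := by
        refine le_trans (ContinuousMultilinearMap.norm_compContinuousLinearMap_le _ _) ?_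
        have hle : (∏ j : Fin (m+1),
            ‖(if (j : ℕ) < (i : ℕ) then piL n else ContinuousLinearMap.id ℝ ((Fin n → ℝ) × ℝ))‖) ≤ 1 :=
          Finset.prod_le_one (fun j _ => norm_nonneg _) (fun j _ => by
            by_cases hj : (j : ℕ) < (i : ℕ)
            · simp only [if_pos hj]; exact norm_piL_le
            · simp only [if_neg hj]; exact ContinuousLinearMap.norm_id_le)
        calc ‖p (m+1)‖ * _ ≤ ‖p (m+1)‖ * 1 :=
              mul_le_mul_of_nonneg_left hle (norm_nonneg _)
          _ = ‖p (m+1)‖ := mul_one _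
      have hQnorm : ‖((p (m+1)).compContinuousLinearMap
          (fun j => if (j : ℕ) < (i : ℕ) then piL n else ContinuousLinearMap.id ℝ _)).domDomCongr
            (Equiv.swap 0 i)‖ ≤ ‖p (m+1)‖ := by
        refine ContinuousMultilinearMap.opNorm_le_bound (norm_nonneg _) ?_
        intro v
        rw [ContinuousMultilinearMap.domDomCongr_apply]
        refine le_trans (ContinuousMultilinearMap.le_opNorm _ _) ?_
        have hpc : (∏ j, ‖v (Equiv.swap 0 i j)‖) = ∏ j, ‖v j‖ :=
          Equiv.prod_comp (Equiv.swap 0 i) (fun j => ‖v j‖)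
        rw [hpc]
        exact mul_le_mul_of_nonneg_right hPnorm (Finset.prod_nonneg fun j _ => norm_nonneg _)
      refine ContinuousMultilinearMap.opNorm_le_bound (norm_nonneg _) ?_
      intro v
      rw [ContinuousMultilinearMap.curryLeft_apply]
      refine le_trans (ContinuousMultilinearMap.le_opNorm _ _) ?_
      have hprod : (∏ j : Fin (m+1),
          ‖Fin.cons (α := fun _ : Fin (m+1) => (Fin n → ℝ) × ℝ) (eV n) v j‖)
          = ‖eV n‖ * ∏ j : Fin m, ‖v j‖ := by
        rw [Fin.prod_univ_succ]
        simp
      rw [hprod, norm_eV, one_mul]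
      exact mul_le_mul_of_nonneg_right hQnorm (Finset.prod_nonneg fun j _ => norm_nonneg _)
    refine le_trans (Finset.sum_le_sum (fun i (_ : i ∈ Finset.univ) => hterm_norm i)) ?_
    rw [Finset.sum_const, Finset.card_univ, Fintype.card_fin, nsmul_eq_mul]
    push_cast
    exact le_of_eq (by ring)
  -- radius positivity
  obtain ⟨s', hs'0, hs'r⟩ := ENNReal.lt_iff_exists_nnreal_btwn.1 hpr.r_pos
  have hs'pos0 : 0 < s' := ENNReal.coe_pos.mp hs'0
  have hs'pos : (0:ℝ) < (s' : ℝ) := NNReal.coe_pos.mpr hs'pos0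
  obtain ⟨C, hC0, hC⟩ := p.norm_mul_pow_le_of_lt_radius (lt_of_lt_of_le hs'r hpr.r_le)
  have hhalf : ((1:ℝ)/2) < 1 := by norm_num
  have hsummaj : Summable (fun m : ℕ => (C / s') * (((m:ℝ)+1) * (1/2)^m)) := by
    have h2 : Summable (fun m : ℕ => ((m:ℝ)) * (1/2)^m) := by
      have hn : ‖(1/2 : ℝ)‖ < 1 := by
        rw [Real.norm_eq_abs, abs_of_pos] <;> norm_num
      simpa using summable_pow_mul_geometric_of_norm_lt_one 1 hn
    have h3 : Summable (fun m : ℕ => ((1:ℝ)/2)^m) :=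
      summable_geometric_of_lt_one (by norm_num) (by norm_num)
    have h4 := h2.add h3
    have h5 : Summable (fun m : ℕ => ((m:ℝ)+1) * (1/2)^m) := by
      refine h4.congr (fun m => ?_)
      ring
    exact h5.mul_left _
  have hsum : Summable (fun m => ‖q m‖ * ((s' / 2 : ℝ≥0) : ℝ) ^ m) := by
    refine Summable.of_nonneg_of_le
      (fun m => mul_nonneg (norm_nonneg _) (pow_nonneg (by positivity) m)) (fun m => ?_) hsummaj
    have hcoe : ((s' / 2 : ℝ≥0) : ℝ) = (s' : ℝ) / 2 := by
      push_cast
      ring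
    rw [hcoe]
    have hp1 : ‖p (m+1)‖ * (s' : ℝ) ^ (m+1) ≤ C := hC (m+1)
    have hb1 : ‖q m‖ * ((s':ℝ)/2)^m ≤ (((m:ℝ)+1) * ‖p (m+1)‖) * ((s':ℝ)/2)^m := by
      exact mul_le_mul_of_nonneg_right (hq_norm m) (by positivity)
    refine le_trans hb1 ?_
    have hexp : (((m:ℝ)+1) * ‖p (m+1)‖) * ((s':ℝ)/2)^m
        = ((m:ℝ)+1) * (1/2)^m / (s':ℝ) * (‖p (m+1)‖ * (s':ℝ)^(m+1)) := by
      field_simp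
      ring
    rw [hexp]
    have h1 : ((m:ℝ)+1) * (1/2)^m / (s':ℝ) * (‖p (m+1)‖ * (s':ℝ)^(m+1))
        ≤ ((m:ℝ)+1) * (1/2)^m / (s':ℝ) * C :=
      mul_le_mul_of_nonneg_left hp1 (by positivity)
    refine le_trans h1 ?_
    apply le_of_eq
    field_simp
  have hrad : 0 < q.radius := by
    refine lt_of_lt_of_le ?_ (q.le_radius_of_summable_norm hsum)
    rw [ENNReal.coe_pos]
    rw [← NNReal.coe_pos, NNReal.coe_div]
    positivity
  -- the function S
  refine ⟨fun z => q.sum (z - ((x₀, 0) : (Fin n → ℝ) × ℝ)), ?_, ?_⟩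
  · have h2 : AnalyticAt ℝ (fun z : (Fin n → ℝ) × ℝ => z - (x₀, 0)) (x₀, 0) :=
      analyticAt_id.sub analyticAt_const
    have h1 : AnalyticAt ℝ q.sum (((x₀, 0) : (Fin n → ℝ) × ℝ) - (x₀, 0)) := by
      rw [sub_self]
      exact (q.hasFPowerSeriesOnBall hrad).analyticAt
    exact AnalyticAt.comp (f := fun z : (Fin n → ℝ) × ℝ => z - (x₀, 0)) h1 h2
  · rw [Metric.eventually_nhds_iff]
    refine ⟨min ε (s' : ℝ), lt_min hε hs'pos, ?_⟩
    intro p' hp'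
    set w : (Fin n → ℝ) × ℝ := p' - (x₀, 0) with hwdef
    have hw_norm : ‖w‖ < min ε (s' : ℝ) := by
      rw [hwdef, ← dist_eq_norm]
      exact hp'
    have hw_eps : ‖w‖ < ε := lt_of_lt_of_le hw_norm (min_le_left _ _)
    have hw_s : ‖w‖ < (s' : ℝ) := lt_of_lt_of_le hw_norm (min_le_right _ _)
    have hball : ∀ u : (Fin n → ℝ) × ℝ, ‖u‖ ≤ ‖w‖ → u ∈ Metric.eball (0 : (Fin n → ℝ) × ℝ) r := by
      intro u hu
      rw [mem_emetric_ball_zero_iff]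
      refine lt_trans ?_ hs'r
      rw [enorm_lt_coe]
      have : ‖u‖ < (s' : ℝ) := lt_of_le_of_lt hu hw_s
      exact_mod_cast this
    have h1 := hpr.hasSum (hball w (le_refl _))
    have h2 := hpr.hasSum (hball (piL n w) (norm_piL_apply_le w))
    have hpw : ((x₀, 0) : (Fin n → ℝ) × ℝ) + w = p' := by
      rw [hwdef]; abel
    have hπw : ((x₀, 0) : (Fin n → ℝ) × ℝ) + piL n w = (x₀ + w.1, 0) := by
      rw [piL_apply]
      ext <;> simp
    have hFπ : F ((x₀, 0) + piL n w) = 0 := by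
      rw [hπw]
      apply hε0
      rw [dist_eq_norm]
      simp only [add_sub_cancel_left]
      exact lt_of_le_of_lt (norm_fst_le w) hw_eps
    rw [hpw] at h1
    rw [hFπ] at h2
    have h3 := h1.sub h2
    rw [sub_zero] at h3
    have h00 : p 0 (fun _ : Fin 0 => w) - p 0 (fun _ : Fin 0 => piL n w) = 0 := by
      rw [Subsingleton.elim (fun _ : Fin 0 => w) (fun _ : Fin 0 => piL n w)]
      exact sub_self _
    have h4 : HasSum (fun m => p (m+1) (fun _ => w) - p (m+1) (fun _ => piL n w)) (F p') := by
      refine (hasSum_nat_add_iff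
        (f := fun m => p m (fun _ => w) - p m (fun _ => piL n w)) 1).2 ?_
      have hz : F p' + ∑ i ∈ Finset.range 1, (p i (fun _ => w) - p i (fun _ => piL n w)) = F p' := by
        rw [Finset.sum_range_one, h00, add_zero]
      rw [hz]
      exact h3
    have h5 : HasSum (fun m => w.2 * q m (fun _ => w)) (F p') := by
      have heq : (fun m => w.2 * q m (fun _ => w))
          = fun m => p (m+1) (fun _ => w) - p (m+1) (fun _ => piL n w) :=
        funext (fun m => hq_diag m w)
      rw [heq]
      exact h4
    by_cases hw2 : w.2 = 0
    · have hp2 : p'.2 = 0 := by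
        have : w.2 = p'.2 - 0 := by rw [hwdef]; rfl
        rw [this, sub_zero] at hw2
        exact hw2
      have hps : p' = (p'.1, 0) := by
        rw [← hp2]
      show F p' = p'.2 * q.sum (p' - (x₀, 0))
      rw [hp2, zero_mul, hps]
      apply hε0
      have : dist p'.1 x₀ ≤ dist p' ((x₀, 0) : (Fin n → ℝ) × ℝ) := by
        rw [Prod.dist_eq]
        exact le_max_left _ _
      exact lt_of_le_of_lt this (lt_of_lt_of_le hp' (min_le_left _ _))
    · have h6 : HasSum (fun m => q m (fun _ => w)) (F p' / w.2) := by
        have h7 := h5.div_const w.2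
        rw [show (fun m => w.2 * q m (fun _ => w) / w.2) = fun m => q m (fun _ => w)
          from funext fun m => mul_div_cancel_left₀ _ hw2] at h7
        exact h7
      have h8 : q.sum w = F p' / w.2 := h6.tsum_eq
      show F p' = p'.2 * q.sum (p' - (x₀, 0))
      rw [← hwdef, h8]
      have hp2 : p'.2 = w.2 := by rw [hwdef]; simp
      rw [hp2]
      field_simp

lemma slice_analytic {F : ((Fin n → ℝ) × ℝ) → ℝ} {x : Fin n → ℝ} {t₀ : ℝ}
    (h : AnalyticAt ℝ F (x, t₀)) : AnalyticAt ℝ (fun t => F (x, t)) t₀ := by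
  have h2 : AnalyticAt ℝ (fun t : ℝ => ((x, t) : (Fin n → ℝ) × ℝ)) t₀ :=
    analyticAt_const.prod analyticAt_id
  exact (AnalyticAt.comp (f := fun t : ℝ => ((x, t) : (Fin n → ℝ) × ℝ)) (by exact h) h2 : _)

lemma divide_by_y_pow {F : ((Fin n → ℝ) × ℝ) → ℝ} {x₀ : Fin n → ℝ} (d : ℕ)
    (hF : AnalyticAt ℝ F (x₀, 0))
    (h : ∀ j < d, ∀ᶠ x in nhds x₀, iteratedDeriv j (fun t => F (x, t)) 0 = 0) :
    ∃ S : ((Fin n → ℝ) × ℝ) → ℝ, AnalyticAt ℝ S (x₀, 0) ∧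
      ∀ᶠ p in nhds ((x₀, 0) : (Fin n → ℝ) × ℝ), F p = p.2 ^ d * S p := by
  induction d with
  | zero =>
    exact ⟨F, hF, Filter.Eventually.of_forall (fun p => by simp)⟩
  | succ d ih =>
    obtain ⟨S, hSa, hSe⟩ := ih (fun j hj => h j (Nat.lt_succ_of_lt hj))
    have hS0 : ∀ᶠ x in nhds x₀, S (x, 0) = 0 := by
      have hcomb := hSe.and hSa.eventually_analyticAt
      rw [nhds_prod_eq] at hcomb
      have hcurry := hcomb.curry
      filter_upwards [hcurry, h d (Nat.lt_succ_self d)] with x hx hder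
      have hx0 : AnalyticAt ℝ S (x, 0) := (hx.self_of_nhds).2
      have hgan : AnalyticAt ℝ (fun t => S (x, t)) 0 := slice_analytic hx0
      have hEq : (fun t => F (x, t)) =ᶠ[𝓝 (0:ℝ)] (fun t => t ^ d * S (x, t)) := by
        filter_upwards [hx] with t ht using ht.1
      have hID : iteratedDeriv d (fun t => F (x, t)) 0
          = iteratedDeriv d (fun t => t ^ d * S (x, t)) 0 := hEq.iteratedDeriv_eq d
      rw [hder] at hID
      rw [iteratedDeriv_pow_mul_self d _ hgan] at hID
      have hd0 : (d.factorial : ℝ) ≠ 0 := Nat.cast_ne_zero.2 d.factorial_ne_zero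
      exact (mul_eq_zero.mp hID.symm).resolve_left hd0
    obtain ⟨S', hS'a, hS'e⟩ := divide_by_y hSa hS0
    refine ⟨S', hS'a, ?_⟩
    filter_upwards [hSe, hS'e] with p h1 h2
    rw [h1, h2]
    ring

lemma iteratedDeriv_poly_add_pow (a : ℕ → ℝ) (m dd j : ℕ) (g : ℝ → ℝ)
    (hg : AnalyticAt ℝ g 0) (hjd : j < dd) :
    iteratedDeriv j (fun t : ℝ => (∑ i ∈ Finset.range m, a i * t ^ i) + t ^ dd * g t) 0
      = if j < m then a j * (j.factorial : ℝ) else 0 := by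
  have hrest : AnalyticAt ℝ (fun t : ℝ => t ^ dd * g t) 0 := by
    exact (analyticAt_id.pow dd).mul hg
  rw [iteratedDeriv_add_an j (analyticAt_polysum a m 0) hrest,
    iteratedDeriv_polysum, iteratedDeriv_pow_mul_lt j dd g hg hjd, add_zero]

end Divide

end LMX

open LMX



/-- The `i`-th partial derivative of `G(x,y)` with respect to `y`. -/
noncomputable def yDeriv {n : ℕ} (G : (Fin n → ℝ) × ℝ → ℝ) (i : ℕ)
    (x : Fin n → ℝ) (y : ℝ) : ℝ :=
  iteratedDeriv i (fun t => G (x, t)) y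

/-- `G` is `y`-regular of order `k` at `(x₀, y₀)`. -/
def YRegular {n : ℕ} (G : (Fin n → ℝ) × ℝ → ℝ) (k : ℕ)
    (x₀ : Fin n → ℝ) (y₀ : ℝ) : Prop :=
  yDeriv G k x₀ y₀ ≠ 0 ∧ ∀ j < k, yDeriv G j x₀ y₀ = 0

/-- Lemma 4.4 (first part, analytic case): with `cᵢ(x) = (∂ⁱG/∂yⁱ)(x,0)`, if
`c_{d-1} ≡ 0`, each `cᵢ` (`i < d-1`) is divisible by `x^{α(d-i)}` with quotient `cᵢ*`,
and `c_k*(0) ≠ 0` for some `k < d-1`, then `H(x,y) = x^{-αd}·G(x, x^α y)` extends to an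
analytic function near `(0,0)` which is `y`-regular of order at most `k` at `(0,0)`. -/
theorem lemma_machine
    (n : ℕ) (U : Set ((Fin n → ℝ) × ℝ)) (hU : U ∈ nhds ((0, 0) : (Fin n → ℝ) × ℝ))
    (G : (Fin n → ℝ) × ℝ → ℝ) (hG : AnalyticOnNhd ℝ G U)
    (d : ℕ) (hd : 1 < d) (hreg : YRegular G d 0 0)
    (α : Fin n → ℕ)
    (hcd1 : ∀ᶠ x in nhds (0 : Fin n → ℝ), yDeriv G (d - 1) x 0 = 0)
    (cstar : ℕ → (Fin n → ℝ) → ℝ)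
    (hcstar : ∀ i < d - 1, ∀ᶠ x in nhds (0 : Fin n → ℝ),
      AnalyticAt ℝ (cstar i) x ∧
        yDeriv G i x 0 = (∏ j, x j ^ ((d - i) * α j)) * cstar i x)
    (k : ℕ) (hk : k < d - 1) (hk0 : cstar k 0 ≠ 0) :
    ∃ V ∈ nhds ((0, 0) : (Fin n → ℝ) × ℝ), ∃ H : (Fin n → ℝ) × ℝ → ℝ,
      AnalyticOnNhd ℝ H V ∧
      (∀ p ∈ V, (∏ j, p.1 j ^ (d * α j)) * H p = G (p.1, (∏ j, p.1 j ^ α j) * p.2)) ∧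
      ∃ k' ≤ k, YRegular H k' 0 0 := by
  classical
  -- combine the hcstar family into a single eventual statement
  have hcs : ∀ᶠ x in nhds (0 : Fin n → ℝ), ∀ i < d - 1,
      AnalyticAt ℝ (cstar i) x ∧
        yDeriv G i x 0 = (∏ j, x j ^ ((d - i) * α j)) * cstar i x := by
    have h1 := (Filter.eventually_all_finset (Finset.range (d-1))
      (p := fun i x => AnalyticAt ℝ (cstar i) x ∧
        yDeriv G i x 0 = (∏ j, x j ^ ((d - i) * α j)) * cstar i x)).2
      (fun i hi => hcstar i (Finset.mem_range.1 hi))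
    filter_upwards [h1] with x hx i hid using hx i (Finset.mem_range.2 hid)
  obtain ⟨O1, hO1, hO1open, hO1mem⟩ := eventually_nhds_iff.1 (hcs.and hcd1)
  -- the subtracted polynomial and the function T
  set Pf : ((Fin n → ℝ) × ℝ) → ℝ := fun p => ∑ i ∈ Finset.range (d-1),
    (∏ j, p.1 j ^ ((d - i) * α j)) * cstar i p.1 / (i.factorial : ℝ) * p.2 ^ i with hPf
  set T : ((Fin n → ℝ) × ℝ) → ℝ := fun p => G p - Pf p with hT
  -- coordinate analyticity
  have hcoord : ∀ (j : Fin n) (q : (Fin n → ℝ) × ℝ),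
      AnalyticAt ℝ (fun q : (Fin n → ℝ) × ℝ => q.1 j) q := by
    intro j q
    exact ((ContinuousLinearMap.proj j).comp
      (ContinuousLinearMap.fst ℝ (Fin n → ℝ) ℝ)).analyticAt q
  have hsnd : ∀ (q : (Fin n → ℝ) × ℝ), AnalyticAt ℝ (fun q : (Fin n → ℝ) × ℝ => q.2) q := by
    intro q
    exact (ContinuousLinearMap.snd ℝ (Fin n → ℝ) ℝ).analyticAt q
  have hPan : ∀ p : (Fin n → ℝ) × ℝ, p.1 ∈ O1 → AnalyticAt ℝ Pf p := by
    intro p hp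
    rw [hPf]
    apply Finset.analyticAt_fun_sum
    intro i hi
    have hcsi : AnalyticAt ℝ (cstar i) p.1 := ((hO1 p.1 hp).1 i (Finset.mem_range.1 hi)).1
    have h1 : AnalyticAt ℝ (fun q : (Fin n → ℝ) × ℝ => ∏ j, q.1 j ^ ((d - i) * α j)) p :=
      Finset.analyticAt_fun_prod Finset.univ (fun j _ => (hcoord j p).pow _)
    have h2 : AnalyticAt ℝ (fun q : (Fin n → ℝ) × ℝ => cstar i q.1) p := by
      have := hcsi.comp ((ContinuousLinearMap.fst ℝ (Fin n → ℝ) ℝ).analyticAt p)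
      exact this
    have h3 : AnalyticAt ℝ (fun q : (Fin n → ℝ) × ℝ => q.2 ^ i) p := (hsnd p).pow i
    exact (((h1.mul h2).div analyticAt_const
      (by exact_mod_cast i.factorial_ne_zero)).mul h3)
  -- vanishing of the y-derivatives of T up to order d
  have hTd : ∀ j, j < d → ∀ᶠ x in nhds (0 : Fin n → ℝ),
      iteratedDeriv j (fun t => T (x, t)) 0 = 0 := by
    intro j hj
    have hcont : Continuous (fun x : Fin n → ℝ => ((x, 0) : (Fin n → ℝ) × ℝ)) := by
      continuity
    have hU0 : ∀ᶠ x in nhds (0 : Fin n → ℝ), ((x, 0) : (Fin n → ℝ) × ℝ) ∈ interior U := by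
      have hIU : interior U ∈ nhds ((0,0) : (Fin n → ℝ) × ℝ) :=
        isOpen_interior.mem_nhds (mem_interior_iff_mem_nhds.2 hU)
      exact hcont.continuousAt.preimage_mem_nhds hIU
    have hO1' : ∀ᶠ x in nhds (0 : Fin n → ℝ), x ∈ O1 :=
      hO1open.mem_nhds hO1mem
    filter_upwards [hU0, hO1'] with x hxU hxO
    have hGsl : AnalyticAt ℝ (fun t => G (x, t)) 0 :=
      slice_analytic (hG _ (interior_subset hxU))
    set a : ℕ → ℝ := fun i => (∏ j, x j ^ ((d - i) * α j)) * cstar i x / (i.factorial : ℝ)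
      with ha
    have hPsl : (fun t : ℝ => Pf (x, t)) = fun t => ∑ i ∈ Finset.range (d-1), a i * t ^ i := by
      funext t
      rw [hPf, ha]
    have hPanx : AnalyticAt ℝ (fun t : ℝ => Pf (x, t)) 0 := by
      rw [hPsl]
      exact analyticAt_polysum a (d-1) 0
    have hTsl : iteratedDeriv j (fun t => T (x, t)) 0
        = iteratedDeriv j (fun t => G (x, t)) 0 - iteratedDeriv j (fun t => Pf (x, t)) 0 := by
      have := iteratedDeriv_sub_an j hGsl hPanx
      rw [← this]
    have hPder : iteratedDeriv j (fun t => Pf (x, t)) 0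
        = if j < d - 1 then a j * (j.factorial : ℝ) else 0 := by
      rw [hPsl]
      exact iteratedDeriv_polysum a (d-1) j
    rw [hTsl, hPder]
    by_cases hjd : j < d - 1
    · rw [if_pos hjd]
      have hGder := ((hO1 x hxO).1 j hjd).2
      simp only [yDeriv] at hGder
      rw [hGder, ha]
      have hfac : (j.factorial : ℝ) ≠ 0 := by exact_mod_cast j.factorial_ne_zero
      field_simp
      ring
    · rw [if_neg hjd]
      have hjd1 : j = d - 1 := by omega
      subst hjd1
      have hGder := (hO1 x hxO).2
      simp only [yDeriv] at hGder
      rw [hGder, sub_zero]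
  -- divide T by y^d
  have hTan00 : AnalyticAt ℝ T ((0 : Fin n → ℝ), (0:ℝ)) := by
    rw [hT]
    exact (hG _ (mem_of_mem_nhds hU)).sub (hPan _ hO1mem)
  obtain ⟨S, hSa, hSe⟩ := divide_by_y_pow d hTan00 (fun j hj => hTd j hj)
  obtain ⟨W, hW, hWopen, hWmem⟩ := eventually_nhds_iff.1 hSe
  obtain ⟨WS, hWS, hWSopen, hWSmem⟩ := eventually_nhds_iff.1 hSa.eventually_analyticAt
  -- the map φ
  set φ : ((Fin n → ℝ) × ℝ) → ((Fin n → ℝ) × ℝ) :=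
    fun p => (p.1, (∏ j, p.1 j ^ α j) * p.2) with hφ
  have hφan : ∀ p, AnalyticAt ℝ φ p := by
    intro p
    rw [hφ]
    refine AnalyticAt.prod ?_ ?_
    · exact (ContinuousLinearMap.fst ℝ (Fin n → ℝ) ℝ).analyticAt p
    · exact (Finset.analyticAt_fun_prod Finset.univ (fun j _ => (hcoord j p).pow _)).mul (hsnd p)
  have hφcont : Continuous φ := by
    rw [hφ]
    fun_prop
  have hφ00 : φ ((0,0) : (Fin n → ℝ) × ℝ) = ((0,0) : (Fin n → ℝ) × ℝ) := by
    rw [hφ]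
    simp
  -- the neighbourhood V
  refine ⟨interior U ∩ (Prod.fst ⁻¹' O1) ∩ (φ ⁻¹' (W ∩ WS)), ?_, ?_⟩
  · refine IsOpen.mem_nhds ?_ ?_
    · exact (isOpen_interior.inter (hO1open.preimage continuous_fst)).inter
        ((hWopen.inter hWSopen).preimage hφcont)
    · refine ⟨⟨mem_interior_iff_mem_nhds.2 hU, hO1mem⟩, ?_⟩
      rw [Set.mem_preimage, hφ00]
      exact ⟨hWmem, hWSmem⟩
  -- the function H
  refine ⟨fun p => (∑ i ∈ Finset.range (d-1), cstar i p.1 / (i.factorial : ℝ) * p.2 ^ i)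
      + p.2 ^ d * S (φ p), ?_, ?_, ?_⟩
  · -- analytic on V
    intro p hp
    obtain ⟨⟨hpU, hpO⟩, hpφ⟩ := hp
    refine AnalyticAt.add ?_ ?_
    · apply Finset.analyticAt_fun_sum
      intro i hi
      have hcsi : AnalyticAt ℝ (cstar i) p.1 := ((hO1 p.1 hpO).1 i (Finset.mem_range.1 hi)).1
      have h2 : AnalyticAt ℝ (fun q : (Fin n → ℝ) × ℝ => cstar i q.1) p := by
        have := hcsi.comp ((ContinuousLinearMap.fst ℝ (Fin n → ℝ) ℝ).analyticAt p)
        exact this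
      exact (h2.div analyticAt_const (by exact_mod_cast i.factorial_ne_zero)).mul ((hsnd p).pow i)
    · refine AnalyticAt.mul ((hsnd p).pow d) ?_
      have hSφ : AnalyticAt ℝ S (φ p) := hWS _ (Set.mem_preimage.1 hpφ).2
      exact hSφ.comp (hφan p)
  · -- the identity on V
    intro p hp
    obtain ⟨⟨hpU, hpO⟩, hpφ⟩ := hp
    have hTφ : T (φ p) = (φ p).2 ^ d * S (φ p) := hW _ (Set.mem_preimage.1 hpφ).1
    have hGφ : G (φ p) = T (φ p) + Pf (φ p) := by
      rw [hT]
      ring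
    have hgoal : G (p.1, (∏ j, p.1 j ^ α j) * p.2) = G (φ p) := by rw [hφ]
    rw [hgoal, hGφ, hTφ]
    set cX : ℝ := ∏ j, p.1 j ^ α j with hcX
    have hφ1 : (φ p).1 = p.1 := by rw [hφ]
    have hφ2 : (φ p).2 = cX * p.2 := by rw [hφ, hcX]
    have hpowd : (∏ j, p.1 j ^ (d * α j)) = cX ^ d := by
      rw [hcX, ← Finset.prod_pow]
      exact Finset.prod_congr rfl (fun j _ => by rw [← pow_mul, mul_comm])
    have hpowi : ∀ i, (∏ j, p.1 j ^ ((d - i) * α j)) = cX ^ (d - i) := by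
      intro i
      rw [hcX, ← Finset.prod_pow]
      exact Finset.prod_congr rfl (fun j _ => by rw [← pow_mul, mul_comm])
    have hPfφ : Pf (φ p) = ∑ i ∈ Finset.range (d-1),
        cX ^ d * (cstar i p.1 / (i.factorial : ℝ) * p.2 ^ i) := by
      rw [hPf]
      refine Finset.sum_congr rfl (fun i hi => ?_)
      have hid : i ≤ d := by
        have := Finset.mem_range.1 hi
        omega
      rw [hφ1, hφ2, hpowi i]
      have hcc : cX ^ (d - i) * cX ^ i = cX ^ d := pow_sub_mul_pow cX hid
      calc cX ^ (d - i) * cstar i p.1 / (i.factorial : ℝ) * (cX * p.2) ^ i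
          = (cX ^ (d - i) * cX ^ i) * (cstar i p.1 / (i.factorial : ℝ) * p.2 ^ i) := by
            rw [mul_pow]; ring
        _ = cX ^ d * (cstar i p.1 / (i.factorial : ℝ) * p.2 ^ i) := by rw [hcc]
    rw [hpowd, hφ2, hPfφ]
    rw [mul_add, Finset.mul_sum, mul_pow]
    ring
  · -- regularity
    have hSφ0 : AnalyticAt ℝ (fun t : ℝ => S (φ ((0 : Fin n → ℝ), t))) 0 := by
      have h1 : AnalyticAt ℝ (fun t : ℝ => φ ((0 : Fin n → ℝ), t)) 0 :=
        (hφan ((0,0) : (Fin n → ℝ) × ℝ)).comp (analyticAt_const.prod analyticAt_id)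
      have h2 : AnalyticAt ℝ S (φ ((0,0) : (Fin n → ℝ) × ℝ)) := by
        rw [hφ00]; exact hSa
      exact AnalyticAt.comp (f := fun t : ℝ => φ ((0 : Fin n → ℝ), t)) (by exact h2) h1
    set Hf : ((Fin n → ℝ) × ℝ) → ℝ := fun p =>
      (∑ i ∈ Finset.range (d-1), cstar i p.1 / (i.factorial : ℝ) * p.2 ^ i)
        + p.2 ^ d * S (φ p) with hHf
    have hHj : ∀ j, j < d - 1 → yDeriv Hf j 0 0 = cstar j 0 := by
      intro j hj
      show iteratedDeriv j (fun t => Hf ((0 : Fin n → ℝ), t)) 0 = cstar j 0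
      have heq : (fun t : ℝ => Hf ((0 : Fin n → ℝ), t))
          = fun t => (∑ i ∈ Finset.range (d-1),
              (cstar i (0 : Fin n → ℝ) / (i.factorial : ℝ)) * t ^ i)
            + t ^ d * S (φ ((0 : Fin n → ℝ), t)) := by
        funext t; simp only [hHf]
      rw [heq, iteratedDeriv_poly_add_pow
        (fun i => cstar i (0 : Fin n → ℝ) / (i.factorial : ℝ)) (d-1) d j _ hSφ0 (by omega),
        if_pos hj]
      have hfac : (j.factorial : ℝ) ≠ 0 := by exact_mod_cast j.factorial_ne_zero
      field_simp
    have hex : ∃ j, j ≤ k ∧ yDeriv Hf j 0 0 ≠ 0 :=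
      ⟨k, le_refl k, by rw [hHj k hk]; exact hk0⟩
    refine ⟨Nat.find hex, (Nat.find_spec hex).1, (Nat.find_spec hex).2, fun j hjlt => ?_⟩
    by_contra hne
    exact Nat.find_min hex hjlt ⟨(lt_of_lt_of_le hjlt (Nat.find_spec hex).1).le, hne⟩
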